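/- A ring R is nil clean if and only if there exists a central idempotent e ∈ R such that the two-sided ideals generated by e and by 1 - e are both nil clean ideals of R. -/

import Mathlib

def IsNilCleanIdeal {R : Type*} [Ring R] (I : TwoSidedIdeal R) : Prop :=
  ∀ x ∈ I, ∃ e n : R, IsIdempotentElem e ∧ IsNilpotent n ∧ x = e + n

/-- If `e` is a central idempotent and `x * e` decomposes as `f + n`, then it decomposes
with pieces lying in `eR`. -/
lemma decomp_corner {R : Type*} [Ring R] {e : R} (he : IsIdempotentElem e)
    (hc : ∀ x : R, e * x = x * e) {x f n : R} (hf : IsIdempotentElem f) (hn : IsNilpotent n)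
    (hx : x * e = f + n) :
    x * e = f * e + n * e ∧ IsIdempotentElem (f * e) ∧ IsNilpotent (n * e) := by
  refine ⟨?_, ?_, ?_⟩
  · have : x * e = x * e * e := by rw [mul_assoc, he]
    rw [this, hx, add_mul]
  · exact hf.mul_of_commute ((hc f).symm) he
  · exact Commute.isNilpotent_mul_right ((hc n : Commute e n).symm) hn

/-- `R` is nil clean iff there is a central idempotent `e` such that the ideals generated by
`e` and `1 - e` are both nil clean ideals. -/
theorem nilClean_iff_exists_central_idem {R : Type*} [Ring R] :
    (∀ x : R, ∃ e n : R, IsIdempotentElem e ∧ IsNilpotent n ∧ x = e + n) ↔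
      ∃ e : R, IsIdempotentElem e ∧ (∀ x : R, e * x = x * e) ∧
        IsNilCleanIdeal (TwoSidedIdeal.span {e}) ∧
        IsNilCleanIdeal (TwoSidedIdeal.span {1 - e}) := by
  constructor
  · intro h
    exact ⟨1, IsIdempotentElem.one, fun x => by rw [one_mul, mul_one],
      fun x _ => h x, fun x _ => h x⟩
  · rintro ⟨e, he, hc, h1, h2⟩ x
    have hf' : IsIdempotentElem (1 - e) := he.one_sub
    have hc' : ∀ y : R, (1 - e) * y = y * (1 - e) := fun y => by
      rw [sub_mul, mul_sub, one_mul, mul_one, hc]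
    -- decompose x * e
    have hmem1 : x * e ∈ TwoSidedIdeal.span {e} :=
      TwoSidedIdeal.mul_mem_left _ _ _ (TwoSidedIdeal.subset_span rfl)
    have hmem2 : x * (1 - e) ∈ TwoSidedIdeal.span {1 - e} :=
      TwoSidedIdeal.mul_mem_left _ _ _ (TwoSidedIdeal.subset_span rfl)
    obtain ⟨f1, n1, hf1, hn1, hx1⟩ := h1 _ hmem1
    obtain ⟨f2, n2, hf2, hn2, hx2⟩ := h2 _ hmem2
    obtain ⟨hx1', hp1, hq1⟩ := decomp_corner he hc hf1 hn1 hx1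
    obtain ⟨hx2', hp2, hq2⟩ := decomp_corner hf' hc' hf2 hn2 hx2
    set p := f1 * e
    set q := f2 * (1 - e)
    set m := n1 * e
    set k := n2 * (1 - e)
    have hee : e * (1 - e) = 0 := by rw [mul_sub, mul_one, he, sub_self]
    have hee' : (1 - e) * e = 0 := by rw [sub_mul, one_mul, he, sub_self]
    have hpq : p * q = 0 := by
      show f1 * e * (f2 * (1 - e)) = 0
      rw [mul_assoc, ← mul_assoc e, hc f2, mul_assoc f2, hee, mul_zero, mul_zero]
    have hqp : q * p = 0 := by
      show f2 * (1 - e) * (f1 * e) = 0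
      rw [mul_assoc, ← mul_assoc (1 - e), hc' f1, mul_assoc f1, hee', mul_zero, mul_zero]
    have hmk : m * k = 0 := by
      show n1 * e * (n2 * (1 - e)) = 0
      rw [mul_assoc, ← mul_assoc e, hc n2, mul_assoc n2, hee, mul_zero, mul_zero]
    have hkm : k * m = 0 := by
      show n2 * (1 - e) * (n1 * e) = 0
      rw [mul_assoc, ← mul_assoc (1 - e), hc' n1, mul_assoc n1, hee', mul_zero, mul_zero]
    refine ⟨p + q, m + k, ?_, ?_, ?_⟩
    · show (p + q) * (p + q) = p + q
      rw [add_mul, mul_add, mul_add, hpq, hqp, hp1, hp2, add_zero, zero_add]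
    · exact Commute.isNilpotent_add (hmk.trans hkm.symm) hq1 hq2
    · have : x = x * e + x * (1 - e) := by rw [mul_sub, mul_one]; abel
      rw [this, hx1', hx2']; abel
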